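/- In the product setting with t ≥ 1 segment factors (m_s = 1 and d_s = 1 for every s ∈ [t], so each factor is a full-dimensional segment in ℝ and the product polytope is combinatorially a t-dimensional cube), the number of distinct max-slope arborescences, i.e. the cardinality of the set {A | there exists ω ∈ ℝ^t generic for the product with A = A^ω}, equals t!. (This corresponds to the fact that the pivot polytope of the cube is the permutahedron.) -/

import Mathlib

open scoped RealInnerProductSpace

/-- The slope `ρ^ω(i,j)` of the edge from vertex `u i` to vertex `u j`,
with respect to the objective direction `c`. -/
noncomputable def rho {n d : ℕ} (u : Fin n → EuclideanSpace ℝ (Fin d))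
    (c ω : EuclideanSpace ℝ (Fin d)) (i j : Fin n) : ℝ :=
  ⟪ω, u j - u i⟫ / ⟪c, u j - u i⟫

/-- `τ^ω(i)`: the maximal slope from vertex `i` to a later vertex
(the supremum of the finite set of slopes `ρ^ω(i,j)` for `i < j`;
it is meaningful for non-maximal `i`, where this set is nonempty). -/
noncomputable def tau {n d : ℕ} (u : Fin n → EuclideanSpace ℝ (Fin d))
    (c ω : EuclideanSpace ℝ (Fin d)) (i : Fin n) : ℝ :=
  sSup {x : ℝ | ∃ j : Fin n, i < j ∧ x = rho u c ω i j}

/-- `ω` is generic: for each non-maximal vertex `i` there is a unique `j > i`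
whose slope attains the maximal slope `τ^ω(i)`. -/
def Generic {n d : ℕ} (u : Fin n → EuclideanSpace ℝ (Fin d))
    (c ω : EuclideanSpace ℝ (Fin d)) : Prop :=
  ∀ i : Fin n, (i : ℕ) + 1 < n →
    ∃! j : Fin n, i < j ∧ rho u c ω i j = tau u c ω i

/-- `A` is the max-slope arborescence `A^ω`: it fixes the maximal vertex, and
sends every other vertex `i` to an improving neighbour attaining `τ^ω(i)`. -/
def IsArbo {n d : ℕ} (u : Fin n → EuclideanSpace ℝ (Fin d))
    (c ω : EuclideanSpace ℝ (Fin d)) (A : Fin n → Fin n) : Prop :=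
  (∀ i : Fin n, (i : ℕ) + 1 = n → A i = i) ∧
  (∀ i : Fin n, (i : ℕ) + 1 < n →
    i < A i ∧ rho u c ω i (A i) = tau u c ω i)

/-- The top vertex `(n_1, …, n_t)` of the product polytope. -/
def topVertex {t : ℕ} (m : Fin t → ℕ) : ∀ s : Fin t, Fin (m s + 1) :=
  fun s => Fin.last (m s)

/-- The maximal slope at a vertex `v` of the product polytope: the supremum of
the slopes to improving neighbours, i.e. of the `ρ^{ω_s}(v_s, j)` for `j > v_s`
(a finite set, nonempty when `v` is not the top vertex). -/
noncomputable def prodTau {t : ℕ} {m d : Fin t → ℕ}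
    (u : ∀ s : Fin t, Fin (m s + 1) → EuclideanSpace ℝ (Fin (d s)))
    (c ω : ∀ s : Fin t, EuclideanSpace ℝ (Fin (d s)))
    (v : ∀ s : Fin t, Fin (m s + 1)) : ℝ :=
  sSup {x : ℝ | ∃ s : Fin t, ∃ j : Fin (m s + 1),
    v s < j ∧ x = rho (u s) (c s) (ω s) (v s) j}

/-- `ω` is generic for the product: at each vertex other than the top vertex,
the maximal slope is attained by a unique improving neighbour (encoded by the
coordinate `s` that moves and its new value `j`). -/
def ProdGeneric {t : ℕ} {m d : Fin t → ℕ}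
    (u : ∀ s : Fin t, Fin (m s + 1) → EuclideanSpace ℝ (Fin (d s)))
    (c ω : ∀ s : Fin t, EuclideanSpace ℝ (Fin (d s))) : Prop :=
  ∀ v : ∀ s : Fin t, Fin (m s + 1), v ≠ topVertex m →
    ∃! p : (s : Fin t) × Fin (m s + 1),
      v p.1 < p.2 ∧ rho (u p.1) (c p.1) (ω p.1) (v p.1) p.2 = prodTau u c ω v

/-- `A` is the max-slope arborescence `A^ω` of the product: it fixes the top
vertex, and sends every other vertex `v` to an improving neighbour (differing
from `v` in a single, increased, coordinate) attaining the maximal slope. -/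
def ProdIsArbo {t : ℕ} {m d : Fin t → ℕ}
    (u : ∀ s : Fin t, Fin (m s + 1) → EuclideanSpace ℝ (Fin (d s)))
    (c ω : ∀ s : Fin t, EuclideanSpace ℝ (Fin (d s)))
    (A : (∀ s : Fin t, Fin (m s + 1)) → ∀ s : Fin t, Fin (m s + 1)) : Prop :=
  A (topVertex m) = topVertex m ∧
  ∀ v : ∀ s : Fin t, Fin (m s + 1), v ≠ topVertex m → ∃ s : Fin t,
    v s < A v s ∧ (∀ r : Fin t, r ≠ s → A v r = v r) ∧
    rho (u s) (c s) (ω s) (v s) (A v s) = prodTau u c ω v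


/- ==================== auxiliary development ==================== -/

section Aux

variable {t : ℕ}

lemma fin2_lt_iff : ∀ i j : Fin 2, i < j ↔ i = 0 ∧ j = 1 := by decide

lemma fin2_cases : ∀ i : Fin 2, i = 0 ∨ i = 1 := by decide

lemma fin2_zero_lt_one : (0 : Fin 2) < 1 := by decide

lemma fin2_zero_ne_one : (0 : Fin 2) ≠ 1 := by decide

/-- `s` is a best (max-slope-value) unset coordinate of `v` for the value function `x`. -/
def IsBest (x : Fin t → ℝ) (v : Fin t → Fin 2) (s : Fin t) : Prop :=
  v s = 0 ∧ ∀ r, v r = 0 → x r ≤ x s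

/-- The canonical arborescence attached to a "best coordinate" predicate. -/
noncomputable def arboOf (P : (Fin t → Fin 2) → Fin t → Prop) (v : Fin t → Fin 2) :
    Fin t → Fin 2 :=
  letI := Classical.dec (∃ s, P v s)
  if h : ∃ s, P v s then Function.update v h.choose 1 else v

/-- The canonical arborescence attached to the value function `x`. -/
noncomputable def theArbo (x : Fin t → ℝ) : (Fin t → Fin 2) → Fin t → Fin 2 :=
  arboOf (IsBest x)

lemma ne_top_iff (v : Fin t → Fin 2) :
    v ≠ topVertex (fun _ => 1) ↔ ∃ s, v s = 0 := by
  constructor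
  · intro h
    by_contra hn
    push_neg at hn
    refine h (funext fun s => ?_)
    rcases fin2_cases (v s) with h0 | h1
    · exact absurd h0 (hn s)
    · exact h1
  · rintro ⟨s, hs⟩ h
    have h2 : (0 : Fin 2) = 1 := by
      conv_lhs => rw [← hs]
      rw [h]; rfl
    exact fin2_zero_ne_one h2

lemma exists_best (x : Fin t → ℝ) {v : Fin t → Fin 2} (h : ∃ s, v s = 0) :
    ∃ s, IsBest x v s := by
  obtain ⟨s, hs⟩ := h
  have hne : (Finset.univ.filter (fun r => v r = 0)).Nonempty :=
    ⟨s, by simp [hs]⟩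
  obtain ⟨b, hb, hball⟩ := Finset.exists_max_image _ x hne
  simp only [Finset.mem_filter, Finset.mem_univ, true_and] at hb hball
  exact ⟨b, hb, fun r hr => hball r hr⟩

lemma best_unique {x : Fin t → ℝ} (hx : Function.Injective x)
    {v : Fin t → Fin 2} {s r : Fin t} (hs : IsBest x v s) (hr : IsBest x v r) : s = r :=
  hx (le_antisymm (hr.2 s hs.1) (hs.2 r hr.1))

lemma arboOf_none {P : (Fin t → Fin 2) → Fin t → Prop} {v : Fin t → Fin 2}
    (h : ¬ ∃ s, P v s) : arboOf P v = v := by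
  unfold arboOf
  exact dif_neg h

lemma arboOf_spec {P : (Fin t → Fin 2) → Fin t → Prop} {v : Fin t → Fin 2}
    (h : ∃ s, P v s) : ∃ s, P v s ∧ arboOf P v = Function.update v s 1 := by
  unfold arboOf
  refine ⟨h.choose, h.choose_spec, ?_⟩
  rw [dif_pos h]

variable (u : ∀ _ : Fin t, Fin 2 → EuclideanSpace ℝ (Fin 1))
  (c : ∀ _ : Fin t, EuclideanSpace ℝ (Fin 1))

/-- The per-coordinate slope of `ω`. -/
noncomputable def slopeOf (ω : ∀ _ : Fin t, EuclideanSpace ℝ (Fin 1)) (s : Fin t) : ℝ :=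
  rho (u s) (c s) (ω s) 0 1

lemma prodTau_eq (ω : ∀ _ : Fin t, EuclideanSpace ℝ (Fin 1))
    {v : Fin t → Fin 2} {s₀ : Fin t} (hb : IsBest (slopeOf u c ω) v s₀) :
    prodTau (m := fun _ => 1) (d := fun _ => 1) u c ω v = slopeOf u c ω s₀ := by
  apply IsGreatest.csSup_eq
  constructor
  · refine ⟨s₀, 1, ?_, ?_⟩
    · rw [hb.1]; exact fin2_zero_lt_one
    · rw [hb.1]; rfl
  · rintro x ⟨s, j, hj, rfl⟩
    obtain ⟨h0, h1⟩ := (fin2_lt_iff (v s) j).mp hj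
    rw [h0, h1]
    exact hb.2 s h0

lemma slope_smul (hc : ∀ s : Fin t, ∀ i j : Fin 2, i < j → ⟪c s, u s i⟫ < ⟪c s, u s j⟫)
    (x : Fin t → ℝ) : slopeOf u c (fun s => x s • c s) = x := by
  funext s
  have h : (0:ℝ) < ⟪c s, u s 1 - u s 0⟫ := by
    rw [inner_sub_right]
    linarith [hc s 0 1 fin2_zero_lt_one]
  unfold slopeOf rho
  rw [real_inner_smul_left, mul_div_assoc, div_self h.ne', mul_one]

/-- A generic `ω` has injective slopes. -/
lemma inj_of_generic {ω : ∀ _ : Fin t, EuclideanSpace ℝ (Fin 1)}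
    (hg : ProdGeneric (m := fun _ => 1) (d := fun _ => 1) u c ω) :
    Function.Injective (slopeOf u c ω) := by
  intro a b hab
  by_contra hne
  set x := slopeOf u c ω with hxdef
  set v : Fin t → Fin 2 := fun p => if p = a ∨ p = b then 0 else 1 with hv
  have hva : v a = 0 := by simp [hv]
  have hvb : v b = 0 := by simp [hv]
  have hvt : v ≠ topVertex (fun _ => 1) := (ne_top_iff v).mpr ⟨a, hva⟩
  have hmem : ∀ r, v r = 0 → r = a ∨ r = b := by
    intro r hr
    by_contra hc'
    rw [hv] at hr
    simp only [if_neg hc'] at hr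
    exact fin2_zero_ne_one hr.symm
  have hbest : IsBest x v a := by
    refine ⟨hva, fun r hr => ?_⟩
    rcases hmem r hr with rfl | rfl
    · exact le_refl _
    · exact le_of_eq hab.symm
  have hbestb : IsBest x v b := by
    refine ⟨hvb, fun r hr => ?_⟩
    have := hbest.2 r hr
    rw [hab] at this
    exact this
  obtain ⟨p, _, hp⟩ := hg v hvt
  have h1 : (⟨a, 1⟩ : (s : Fin t) × Fin 2) = p := by
    apply hp
    refine ⟨?_, ?_⟩
    · show v a < 1
      rw [hva]; exact fin2_zero_lt_one
    · show rho (u a) (c a) (ω a) (v a) 1 = _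
      rw [hva, prodTau_eq u c ω hbest]
      rfl
  have h2 : (⟨b, 1⟩ : (s : Fin t) × Fin 2) = p := by
    apply hp
    refine ⟨?_, ?_⟩
    · show v b < 1
      rw [hvb]; exact fin2_zero_lt_one
    · show rho (u b) (c b) (ω b) (v b) 1 = _
      rw [hvb, prodTau_eq u c ω hbestb]
      rfl
  rw [← h2] at h1
  exact hne (congrArg Sigma.fst h1)

/-- Injective slopes give genericity. -/
lemma generic_of_inj {ω : ∀ _ : Fin t, EuclideanSpace ℝ (Fin 1)}
    (hx : Function.Injective (slopeOf u c ω)) :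
    ProdGeneric (m := fun _ => 1) (d := fun _ => 1) u c ω := by
  intro v hv
  obtain ⟨s₀, hb⟩ := exists_best (slopeOf u c ω) ((ne_top_iff v).mp hv)
  refine ⟨⟨s₀, 1⟩, ⟨?_, ?_⟩, ?_⟩
  · show v s₀ < 1
    rw [hb.1]; exact fin2_zero_lt_one
  · show rho (u s₀) (c s₀) (ω s₀) (v s₀) 1 = _
    rw [hb.1, prodTau_eq u c ω hb]
    rfl
  · rintro ⟨s, j⟩ ⟨hlt, hrho⟩
    obtain ⟨h0, h1⟩ := (fin2_lt_iff (v s) j).mp hlt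
    have h1' : j = 1 := h1
    subst h1'
    have hxs : slopeOf u c ω s = slopeOf u c ω s₀ := by
      rw [← prodTau_eq u c ω hb]
      rw [← hrho]
      show rho (u s) (c s) (ω s) 0 1 = _
      rw [← h0]
    have : s = s₀ := hx hxs
    subst this
    exact rfl

lemma theArbo_top (x : Fin t → ℝ) :
    theArbo x (topVertex (fun _ => 1)) = topVertex (fun _ => 1) := by
  apply arboOf_none
  rintro ⟨s, hs, -⟩
  have : (topVertex (fun _ => 1) : Fin t → Fin 2) s = (1 : Fin 2) := rfl
  rw [this] at hs
  exact fin2_zero_ne_one hs.symm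

lemma theArbo_spec (x : Fin t → ℝ) {v : Fin t → Fin 2}
    (hv : v ≠ topVertex (fun _ => 1)) :
    ∃ s, IsBest x v s ∧ theArbo x v = Function.update v s 1 := by
  exact arboOf_spec (exists_best x ((ne_top_iff v).mp hv))

/-- The canonical arborescence of a generic `ω` is an arborescence of `ω`. -/
lemma theArbo_isArbo {ω : ∀ _ : Fin t, EuclideanSpace ℝ (Fin 1)}
    (hx : Function.Injective (slopeOf u c ω)) :
    ProdIsArbo (m := fun _ => 1) (d := fun _ => 1) u c ω (theArbo (slopeOf u c ω)) := by
  refine ⟨theArbo_top _, fun v hv => ?_⟩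
  obtain ⟨s, hb, heq⟩ := theArbo_spec (slopeOf u c ω) hv
  refine ⟨s, ?_, ?_, ?_⟩
  · rw [heq, Function.update_self, hb.1]
    exact fin2_zero_lt_one
  · intro r hr; rw [heq, Function.update_of_ne hr]
  · show rho (u s) (c s) (ω s) (v s) (theArbo (slopeOf u c ω) v s) = _
    rw [heq, Function.update_self, hb.1, prodTau_eq u c ω hb]
    rfl

/-- Any arborescence of a generic `ω` equals the canonical one. -/
lemma arbo_unique {ω : ∀ _ : Fin t, EuclideanSpace ℝ (Fin 1)}
    (hx : Function.Injective (slopeOf u c ω))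
    {A : (Fin t → Fin 2) → Fin t → Fin 2}
    (hA : ProdIsArbo (m := fun _ => 1) (d := fun _ => 1) u c ω A) :
    A = theArbo (slopeOf u c ω) := by
  funext v
  by_cases hv : v = topVertex (fun _ => 1)
  · rw [hv, theArbo_top]
    exact hA.1
  · obtain ⟨s, hlt, hoth, hrho⟩ := hA.2 v hv
    obtain ⟨s₀, hb, heq⟩ := theArbo_spec (slopeOf u c ω) hv
    obtain ⟨h0, h1⟩ := (fin2_lt_iff (v s) (A v s)).mp hlt
    have hxs : slopeOf u c ω s = slopeOf u c ω s₀ := by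
      rw [← prodTau_eq u c ω hb, ← hrho]
      show rho (u s) (c s) (ω s) 0 1 = _
      rw [← h0, ← h1]
    have hss : s = s₀ := hx hxs
    subst hss
    rw [heq]
    funext r
    by_cases hr : r = s
    · subst hr; rw [h1, Function.update_self]
    · rw [hoth r hr, Function.update_of_ne hr]

/-- The canonical arborescence only depends on the order of the values. -/
lemma theArbo_congr {x y : Fin t → ℝ}
    (h : ∀ a b, x a ≤ x b ↔ y a ≤ y b) : theArbo x = theArbo y := by
  have hbest : IsBest x = IsBest y := by
    funext v s
    apply propext
    constructor
    · rintro ⟨h0, hle⟩; exact ⟨h0, fun r hr => (h r s).mp (hle r hr)⟩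
    · rintro ⟨h0, hle⟩; exact ⟨h0, fun r hr => (h r s).mpr (hle r hr)⟩
  unfold theArbo
  rw [hbest]

end Aux

section Main

variable {t : ℕ}

/-- The arborescence associated to a permutation. -/
noncomputable def permArbo (σ : Equiv.Perm (Fin t)) :
    (Fin t → Fin 2) → Fin t → Fin 2 :=
  theArbo (fun s => ((σ s : ℕ) : ℝ))

lemma permVal_inj (σ : Equiv.Perm (Fin t)) :
    Function.Injective (fun s => ((σ s : ℕ) : ℝ)) := by
  intro a b hab
  simp only [Nat.cast_inj] at hab
  exact σ.injective (Fin.val_injective hab)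

lemma permArbo_inj : Function.Injective (permArbo (t := t)) := by
  intro σ σ' h
  have key : ∀ a b : Fin t, a ≠ b → (σ a < σ b ↔ σ' a < σ' b) := by
    intro a b hab
    set v : Fin t → Fin 2 := fun p => if p = a ∨ p = b then 0 else 1 with hv
    have hva : v a = 0 := by simp [hv]
    have hvb : v b = 0 := by simp [hv]
    have hvt : v ≠ topVertex (fun _ => 1) := (ne_top_iff v).mpr ⟨a, hva⟩
    have main : ∀ τ : Equiv.Perm (Fin t), (τ a < τ b ↔ permArbo τ v b = 1) := by
      intro τ
      obtain ⟨s₀, hb, heq⟩ := theArbo_spec (fun s => ((τ s : ℕ) : ℝ)) hvt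
      have hmem : s₀ = a ∨ s₀ = b := by
        by_contra hc'
        have h0 := hb.1
        rw [hv] at h0
        simp only [if_neg hc'] at h0
        exact fin2_zero_ne_one h0.symm
      constructor
      · intro hlt
        have hs₀ : s₀ = b := by
          rcases hmem with rfl | rfl
          · exfalso
            have hle := hb.2 b hvb
            simp only [Nat.cast_le] at hle
            exact absurd hlt (not_lt.mpr (Fin.le_def.mpr hle))
          · rfl
        subst hs₀
        show theArbo _ v s₀ = 1
        rw [heq, Function.update_self]
      · intro h1
        have hs₀ : s₀ = b := by
          rcases hmem with rfl | rfl
          · exfalso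
            have h1' : theArbo (fun s => ((τ s : ℕ) : ℝ)) v b = 1 := h1
            rw [heq, Function.update_of_ne (Ne.symm hab), hvb] at h1'
            exact fin2_zero_ne_one h1'
          · rfl
        subst hs₀
        have hle := hb.2 a hva
        simp only [Nat.cast_le] at hle
        have hne : τ a ≠ τ s₀ := fun hh => hab (τ.injective hh)
        exact lt_of_le_of_ne (Fin.le_def.mpr hle) hne
    rw [main σ, main σ']
    rw [h]
  have hsm : StrictMono (fun i => σ' (σ.symm i)) := by
    intro i j hij
    have hab : σ.symm i ≠ σ.symm j := fun hh => hij.ne (by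
      have := congrArg σ hh
      simpa using this)
    refine (key _ _ hab).mp ?_
    simpa using hij
  have hrange : Set.range (fun i => σ' (σ.symm i)) = Set.range (id : Fin t → Fin t) := by
    rw [Set.range_id]
    exact Set.range_eq_univ.mpr (σ'.surjective.comp σ.symm.surjective)
  haveI : WellFoundedLT (Fin t) := inferInstance
  have hid : (fun i => σ' (σ.symm i)) = id :=
    (StrictMono.range_inj hsm (strictMono_id (α := Fin t))).mp hrange
  apply Equiv.ext
  intro i
  have h2 := congrFun hid (σ i)
  simp only [Equiv.symm_apply_apply, id_eq] at h2
  exact h2.symm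

end Main

/-- for a product of `t` segments (a combinatorial `t`-cube), the
number of max-slope arborescences is `t!` (the pivot polytope of the cube is
the permutahedron). -/
theorem card_arborescences_cube_eq_factorial (t : ℕ) (ht : 1 ≤ t)
    (u : ∀ _ : Fin t, Fin 2 → EuclideanSpace ℝ (Fin 1))
    (c : ∀ _ : Fin t, EuclideanSpace ℝ (Fin 1))
    (hc : ∀ s : Fin t, ∀ i j : Fin 2, i < j → ⟪c s, u s i⟫ < ⟪c s, u s j⟫) :
    {A : (Fin t → Fin 2) → Fin t → Fin 2 |
        ∃ ω : ∀ _ : Fin t, EuclideanSpace ℝ (Fin 1),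
          ProdGeneric (m := fun _ => 1) (d := fun _ => 1) u c ω ∧
          ProdIsArbo (m := fun _ => 1) (d := fun _ => 1) u c ω A}.ncard =
      Nat.factorial t := by
  have hset : {A : (Fin t → Fin 2) → Fin t → Fin 2 |
        ∃ ω : ∀ _ : Fin t, EuclideanSpace ℝ (Fin 1),
          ProdGeneric (m := fun _ => 1) (d := fun _ => 1) u c ω ∧
          ProdIsArbo (m := fun _ => 1) (d := fun _ => 1) u c ω A} =
      Set.range (permArbo (t := t)) := by
    ext A
    simp only [Set.mem_setOf_eq, Set.mem_range]
    constructor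
    · rintro ⟨ω, hgen, hA⟩
      have hx : Function.Injective (slopeOf u c ω) := inj_of_generic u c hgen
      have hAeq : A = theArbo (slopeOf u c ω) := arbo_unique u c hx hA
      set x := slopeOf u c ω with hxdef
      set σ : Equiv.Perm (Fin t) := (Tuple.sort x)⁻¹ with hσ
      have hmono : Monotone (x ∘ Tuple.sort x) := Tuple.monotone_sort x
      have hinj : Function.Injective (x ∘ Tuple.sort x) :=
        hx.comp (Tuple.sort x).injective
      have hsm : StrictMono (x ∘ Tuple.sort x) := hmono.strictMono_of_injective hinj
      have hxa : ∀ a, (x ∘ Tuple.sort x) (σ a) = x a := by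
        intro a
        simp only [Function.comp_apply, hσ]
        exact congrArg x (Equiv.apply_symm_apply (Tuple.sort x) a)
      have horder : ∀ a b, x a ≤ x b ↔ ((σ a : ℕ) : ℝ) ≤ ((σ b : ℕ) : ℝ) := by
        intro a b
        rw [← hxa a, ← hxa b, hsm.le_iff_le, Nat.cast_le]
        exact Fin.le_def
      refine ⟨σ, ?_⟩
      rw [hAeq]
      exact (theArbo_congr horder).symm
    · rintro ⟨σ, rfl⟩
      set x : Fin t → ℝ := fun s => ((σ s : ℕ) : ℝ) with hxdef
      have hslope : slopeOf u c (fun s => x s • c s) = x := slope_smul u c hc x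
      have hinj : Function.Injective (slopeOf u c (fun s => x s • c s)) := by
        rw [hslope]; exact permVal_inj σ
      refine ⟨fun s => x s • c s, generic_of_inj u c hinj, ?_⟩
      have := theArbo_isArbo u c hinj
      rwa [hslope] at this
  rw [hset, ← Set.image_univ, Set.ncard_image_of_injective _ permArbo_inj,
    Set.ncard_univ, Nat.card_eq_fintype_card, Fintype.card_perm, Fintype.card_fin]
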